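/- arXiv:2111.08152 — 2 statements merged into one kernel-verified Lean document; each statement's English description precedes it below -/
import Mathlib

section
/- Let P, P' be orthogonal projections with δ := ‖P' - P‖ < 1, let F = (I - (P'-P)²)^{-1/2} and V = F(I + (P'-P)(2P-I)). Then ‖V - I‖ ≤ ‖F - I‖ + δ‖F‖ ≤ (1+δ)/√(1-δ²) - 1 = √((1+δ)/(1-δ)) - 1. -/
set_option maxHeartbeats 1000000


open scoped Matrix

open scoped Matrix.Norms.L2Operator

/-- With `δ = ‖P' - P‖ < 1`, `F = (I - (P'-P)²)^{-1/2}` (so that `‖F‖ ≤ (1-δ²)^{-1/2}`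
and `‖F - I‖ ≤ (1-δ²)^{-1/2} - 1`), and `V = F(I + (P'-P)(2P-I))`, we have
`‖V - I‖ ≤ ‖F - I‖ + δ‖F‖ ≤ (1+δ)/√(1-δ²) - 1 = √((1+δ)/(1-δ)) - 1`. -/
theorem V_minus_I_bound {n : ℕ} (P P' F V : Matrix (Fin n) (Fin n) ℂ)
    (hP : P * P = P) (hPsa : Pᴴ = P) (hP' : P' * P' = P') (hP'sa : P'ᴴ = P')
    (hδ : ‖P' - P‖ < 1)
    (hFnorm : ‖F‖ ≤ 1 / Real.sqrt (1 - ‖P' - P‖ ^ 2))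
    (hF1 : ‖F - 1‖ ≤ 1 / Real.sqrt (1 - ‖P' - P‖ ^ 2) - 1)
    (hV : V = F * (1 + (P' - P) * (2 * P - 1))) :
    ‖V - 1‖ ≤ ‖F - 1‖ + ‖P' - P‖ * ‖F‖ ∧
    ‖F - 1‖ + ‖P' - P‖ * ‖F‖ ≤ (1 + ‖P' - P‖) / Real.sqrt (1 - ‖P' - P‖ ^ 2) - 1 ∧
    (1 + ‖P' - P‖) / Real.sqrt (1 - ‖P' - P‖ ^ 2) - 1
      = Real.sqrt ((1 + ‖P' - P‖) / (1 - ‖P' - P‖)) - 1 := by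
  set δ := ‖P' - P‖ with hδdef
  have hδ0 : (0:ℝ) ≤ δ := norm_nonneg _
  -- ‖1‖ ≤ 1
  have hone : ‖(1 : Matrix (Fin n) (Fin n) ℂ)‖ ≤ 1 := by
    have h := Matrix.l2_opNorm_conjTranspose_mul_self (1 : Matrix (Fin n) (Fin n) ℂ)
    simp only [Matrix.conjTranspose_one, mul_one] at h
    nlinarith [norm_nonneg (1 : Matrix (Fin n) (Fin n) ℂ)]
  -- ‖2P - 1‖ ≤ 1
  have hU : ‖(P + P - 1 : Matrix (Fin n) (Fin n) ℂ)‖ ≤ 1 := by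
    have h := Matrix.l2_opNorm_conjTranspose_mul_self (P + P - 1 : Matrix (Fin n) (Fin n) ℂ)
    have hcalc : (P + P - 1 : Matrix (Fin n) (Fin n) ℂ)ᴴ * (P + P - 1) = 1 := by
      have h1 : (P + P - 1 : Matrix (Fin n) (Fin n) ℂ)ᴴ = P + P - 1 := by
        rw [Matrix.conjTranspose_sub, Matrix.conjTranspose_add, hPsa, Matrix.conjTranspose_one]
      rw [h1]
      calc (P + P - 1 : Matrix (Fin n) (Fin n) ℂ) * (P + P - 1)
          = P * P + P * P + P * P + P * P - P - P - P - P + 1 := by noncomm_ring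
        _ = 1 := by rw [hP]; abel
    rw [hcalc] at h
    nlinarith [norm_nonneg (P + P - 1 : Matrix (Fin n) (Fin n) ℂ)]
  have h2P : (2 * P - 1 : Matrix (Fin n) (Fin n) ℂ) = P + P - 1 := by
    rw [two_mul]
  have hterm : ‖F * ((P' - P) * (2 * P - 1))‖ ≤ δ * ‖F‖ := by
    calc ‖F * ((P' - P) * (2 * P - 1))‖ ≤ ‖F‖ * ‖(P' - P) * (2 * P - 1)‖ :=
          Matrix.l2_opNorm_mul _ _
      _ ≤ ‖F‖ * (‖P' - P‖ * ‖(2 * P - 1 : Matrix (Fin n) (Fin n) ℂ)‖) := by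
          gcongr; exact Matrix.l2_opNorm_mul _ _
      _ ≤ ‖F‖ * (δ * 1) := by
          gcongr
          rw [h2P]; exact hU
      _ = δ * ‖F‖ := by ring
  have part1 : ‖V - 1‖ ≤ ‖F - 1‖ + δ * ‖F‖ := by
    have hVeq : V - 1 = (F - 1) + F * ((P' - P) * (2 * P - 1)) := by
      rw [hV]; noncomm_ring
    rw [hVeq]
    exact (norm_add_le _ _).trans (by linarith)
  -- numeric facts
  have h1mδ : (0:ℝ) < 1 - δ := by linarith
  have h1pδ : (0:ℝ) < 1 + δ := by linarith
  have hsq : (0:ℝ) < 1 - δ ^ 2 := by nlinarith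
  have hs : (0:ℝ) < Real.sqrt (1 - δ ^ 2) := Real.sqrt_pos.mpr hsq
  have part2 : ‖F - 1‖ + δ * ‖F‖ ≤ (1 + δ) / Real.sqrt (1 - δ ^ 2) - 1 := by
    have h2 : δ * ‖F‖ ≤ δ * (1 / Real.sqrt (1 - δ ^ 2)) := by gcongr
    have : (1 + δ) / Real.sqrt (1 - δ ^ 2) - 1
        = (1 / Real.sqrt (1 - δ ^ 2) - 1) + δ * (1 / Real.sqrt (1 - δ ^ 2)) := by
      field_simp; ring
    rw [this]
    linarith
  refine ⟨part1, part2, ?_⟩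
  have hfact : 1 - δ ^ 2 = (1 + δ) * (1 - δ) := by ring
  have hsp : (0:ℝ) < Real.sqrt (1 + δ) := Real.sqrt_pos.mpr h1pδ
  have hsm : (0:ℝ) < Real.sqrt (1 - δ) := Real.sqrt_pos.mpr h1mδ
  have key : (1 + δ) / (Real.sqrt (1 + δ) * Real.sqrt (1 - δ))
      = Real.sqrt (1 + δ) / Real.sqrt (1 - δ) := by
    rw [div_eq_div_iff (by positivity) hsm.ne']
    rw [← mul_assoc, Real.mul_self_sqrt h1pδ.le]
  rw [hfact, Real.sqrt_mul h1pδ.le, key, Real.sqrt_div h1pδ.le]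
end

section
/- Let κ ≥ 2 and ε ∈ (0,1), and set ℓ = cosh^{-1}(1/ε)/cosh^{-1}(1/cos(1/κ)). Then ℓ ≤ κ·ln(2/ε). -/
/-- Key inequality: `exp t * cos t ≤ 1 + sin t` for `t ∈ (0, 1/2]`. -/
lemma exp_mul_cos_le_one_add_sin (t : ℝ) (ht0 : 0 < t) (ht : t ≤ 1/2) :
    Real.exp t * Real.cos t ≤ 1 + Real.sin t := by
  have habs : |t| ≤ 1 := by rw [abs_of_pos ht0]; linarith
  have hc := Real.cos_bound habs
  have hs := Real.sin_bound habs
  have he := Real.exp_bound habs (n := 4) (by norm_num)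
  rw [abs_of_pos ht0] at hc hs he
  simp [Finset.sum_range_succ, Nat.factorial] at he
  rw [abs_sub_le_iff] at hc hs he
  obtain ⟨hc1, hc2⟩ := hc
  obtain ⟨hs1, hs2⟩ := hs
  obtain ⟨he1, he2⟩ := he
  nlinarith [sq_nonneg t, pow_pos ht0 3, pow_pos ht0 4, pow_pos ht0 5,
    Real.cos_le_one t, Real.neg_one_le_cos t, mul_pos ht0 ht0]

/-- The inverse hyperbolic cosine, `arcosh x = log (x + √(x² - 1))`. -/
noncomputable def arcosh (x : ℝ) : ℝ := Real.log (x + Real.sqrt (x ^ 2 - 1))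

/-- For `κ ≥ 2` and `ε ∈ (0,1)`, the Dolph–Chebyshev filter degree
`ℓ = arcosh(1/ε)/arcosh(1/cos(1/κ))` satisfies `ℓ ≤ κ ln(2/ε)`. -/
theorem chebyshev_degree_bound (κ ε : ℝ) (hκ : 2 ≤ κ) (hε0 : 0 < ε) (hε1 : ε < 1) :
    arcosh (1 / ε) / arcosh (1 / Real.cos (1 / κ)) ≤ κ * Real.log (2 / ε) := by
  have hκ0 : (0:ℝ) < κ := by linarith
  set t := 1 / κ with htdef
  have ht0 : 0 < t := by positivity
  have ht : t ≤ 1/2 := by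
    rw [htdef, div_le_div_iff₀ hκ0 (by norm_num)]; linarith
  have hcos : 0 < Real.cos t := by
    apply Real.cos_pos_of_mem_Ioo
    constructor
    · linarith [Real.pi_gt_three]
    · linarith [Real.pi_gt_three]
  have hsin : 0 < Real.sin t := Real.sin_pos_of_pos_of_lt_pi ht0 (by linarith [Real.pi_gt_three])
  -- denominator bound: arcosh (1 / cos t) ≥ t
  have hsqrt : Real.sqrt ((1 / Real.cos t) ^ 2 - 1) = Real.sin t / Real.cos t := by
    rw [show (1 / Real.cos t) ^ 2 - 1 = (Real.sin t / Real.cos t)^2 by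
      field_simp
      nlinarith [Real.sin_sq_add_cos_sq t]]
    exact Real.sqrt_sq (by positivity)
  have hden : t ≤ arcosh (1 / Real.cos t) := by
    unfold arcosh
    rw [hsqrt]
    have harg : Real.exp t ≤ 1 / Real.cos t + Real.sin t / Real.cos t := by
      rw [← add_div, le_div_iff₀ hcos]
      have := exp_mul_cos_le_one_add_sin t ht0 ht
      linarith
    calc t = Real.log (Real.exp t) := (Real.log_exp t).symm
    _ ≤ _ := Real.log_le_log (Real.exp_pos t) harg
  -- numerator bound: arcosh (1 / ε) ≤ log (2 / ε)
  have hε1' : 1 ≤ 1 / ε := by rw [le_div_iff₀ hε0]; linarith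
  have hnum0 : 0 ≤ arcosh (1 / ε) := by
    unfold arcosh
    apply Real.log_nonneg
    have : 0 ≤ Real.sqrt ((1/ε)^2 - 1) := Real.sqrt_nonneg _
    linarith
  have hnum : arcosh (1 / ε) ≤ Real.log (2 / ε) := by
    unfold arcosh
    apply Real.log_le_log (by positivity)
    have h1 : Real.sqrt ((1/ε)^2 - 1) ≤ 1 / ε := by
      calc Real.sqrt ((1/ε)^2 - 1) ≤ Real.sqrt ((1/ε)^2) := Real.sqrt_le_sqrt (by nlinarith)
      _ = 1/ε := Real.sqrt_sq (by positivity)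
    rw [show (2/ε : ℝ) = 1/ε + 1/ε by ring]
    linarith
  have hdenpos : 0 < arcosh (1 / Real.cos t) := lt_of_lt_of_le ht0 hden
  calc arcosh (1 / ε) / arcosh (1 / Real.cos t)
      ≤ arcosh (1 / ε) / t := by
        apply div_le_div_of_nonneg_left hnum0 ht0 hden
    _ = κ * arcosh (1 / ε) := by rw [htdef]; field_simp
    _ ≤ κ * Real.log (2 / ε) := by
        apply mul_le_mul_of_nonneg_left hnum (by linarith)
end
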